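/- arXiv:1910.00474 — 5 statements merged into one kernel-verified Lean document; each statement's English description precedes it below -/
import Mathlib

section
/- Let r and s be duplicate-free TP relations over the same fact type, and let op ∈ {∪ᵀᵖ, ∩ᵀᵖ, −ᵀᵖ} be a TP set operation. Then for every output tuple u ∈ r opᵀᵖ s there exists exactly one lineage-aware temporal window w ∈ W(r,s) such that w.F = u.F, w.T = u.T, and for every time point t ∈ u.T one has w.λr = λ^{r,u.F}_t and w.λs = λ^{s,u.F}_t. -/
/-- Boolean lineage formulas over a type `V` of tuple identifiers. -/
inductive LineageExpr (V : Type) : Type where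
  | var : V → LineageExpr V
  | not : LineageExpr V → LineageExpr V
  | and : LineageExpr V → LineageExpr V → LineageExpr V
  | or  : LineageExpr V → LineageExpr V → LineageExpr V

/-- A TP tuple: a fact, a lineage expression and a half-open time interval `[ts, te)`. -/
structure TPTuple (F V : Type) where
  fact : F
  lam : LineageExpr V
  ts : ℕ
  te : ℕ

/-- Time point `t` belongs to the interval of tuple `u`. -/
def TPTuple.memT {F V : Type} (t : ℕ) (u : TPTuple F V) : Prop :=
  u.ts ≤ t ∧ t < u.te

/-- All tuples of the relation have nonempty intervals (`Ts < Te`). -/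
def WF {F V : Type} (r : Set (TPTuple F V)) : Prop :=
  ∀ u ∈ r, u.ts < u.te

/-- A TP relation is duplicate-free iff any two distinct tuples have
different facts or disjoint time intervals. -/
def DupFree {F V : Type} (r : Set (TPTuple F V)) : Prop :=
  ∀ u ∈ r, ∀ u' ∈ r, u ≠ u' →
    u.fact ≠ u'.fact ∨ ∀ t : ℕ, ¬ (TPTuple.memT t u ∧ TPTuple.memT t u')

open Classical in
/-- `lamAt r f t` = the lineage `λ^{r,f}_t` of the (for duplicate-free `r`, unique)
tuple of `r` with fact `f` whose interval contains `t`; `none` if no such tuple exists. -/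
noncomputable def lamAt {F V : Type} (r : Set (TPTuple F V)) (f : F) (t : ℕ) :
    Option (LineageExpr V) :=
  if h : ∃ u, u ∈ r ∧ u.fact = f ∧ u.ts ≤ t ∧ t < u.te then some h.choose.lam else none
/-- A lineage-aware temporal window: a fact, a time interval and the pair of
(possibly null) lineages of the valid tuples of the two input relations. -/
structure Window (F V : Type) where
  fact : F
  ts : ℕ
  te : ℕ
  lamr : Option (LineageExpr V)
  lams : Option (LineageExpr V)

/-- Membership in the set of lineage-aware temporal windows `W(r,s)`. -/
def IsWindow {F V : Type} (r s : Set (TPTuple F V)) (w : Window F V) : Prop :=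
  w.ts < w.te ∧
  (∀ t : ℕ, w.ts ≤ t → t < w.te →
    (lamAt r w.fact t ≠ none ∨ lamAt s w.fact t ≠ none) ∧
    lamAt r w.fact t = w.lamr ∧ lamAt s w.fact t = w.lams) ∧
  (w.ts = 0 ∨
    ¬ (lamAt r w.fact (w.ts - 1) = w.lamr ∧ lamAt s w.fact (w.ts - 1) = w.lams)) ∧
  ¬ (lamAt r w.fact w.te = w.lamr ∧ lamAt s w.fact w.te = w.lams)
/-- The three TP set operations. -/
inductive TPOp : Type
  | inter
  | diff
  | union

/-- The filter condition `φ_op` on pairs of possibly-null lineages. -/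
def opFilter {V : Type} : TPOp → Option (LineageExpr V) → Option (LineageExpr V) → Prop
  | .inter, l1, l2 => l1 ≠ none ∧ l2 ≠ none
  | .diff,  l1, _  => l1 ≠ none
  | .union, l1, l2 => l1 ≠ none ∨ l2 ≠ none

/-- The lineage-concatenation function `g_op` (`none` when undefined):
`and`, `andNot` and `or` respectively. -/
def gOp {V : Type} :
    TPOp → Option (LineageExpr V) → Option (LineageExpr V) → Option (LineageExpr V)
  | .inter, some a, some b => some (.and a b)
  | .inter, _, _ => none
  | .diff, some a, none => some a
  | .diff, some a, some b => some (.and a (.not b))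
  | .diff, none, _ => none
  | .union, some a, none => some a
  | .union, none, some b => some b
  | .union, some a, some b => some (.or a b)
  | .union, none, none => none

/-- The result `r opᵀᵖ s` of a TP set operation: tuples `(f, λ, [ts,te))` such that
on all of `[ts,te)` the pair of input lineages is constant, satisfies `φ_op` and
yields `λ` via `g_op`, and the interval is maximal. -/
def opResult {F V : Type} (op : TPOp) (r s : Set (TPTuple F V)) : Set (TPTuple F V) :=
  {u | u.ts < u.te ∧
    ∃ l1 l2 : Option (LineageExpr V),
      opFilter op l1 l2 ∧
      gOp op l1 l2 = some u.lam ∧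
      (∀ t : ℕ, u.ts ≤ t → t < u.te → lamAt r u.fact t = l1 ∧ lamAt s u.fact t = l2) ∧
      (u.ts = 0 ∨
        ¬ (opFilter op (lamAt r u.fact (u.ts - 1)) (lamAt s u.fact (u.ts - 1)) ∧
           gOp op (lamAt r u.fact (u.ts - 1)) (lamAt s u.fact (u.ts - 1)) = some u.lam)) ∧
      ¬ (opFilter op (lamAt r u.fact u.te) (lamAt s u.fact u.te) ∧
         gOp op (lamAt r u.fact u.te) (lamAt s u.fact u.te) = some u.lam)}

/-- For duplicate-free TP relations `r` and `s` and any TP set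
operation `op`, every output tuple `u ∈ r opᵀᵖ s` corresponds to exactly one
lineage-aware temporal window `w ∈ W(r,s)` with the same fact and interval whose
recorded lineages agree with `λ^{r,u.F}_t` and `λ^{s,u.F}_t` at every `t ∈ u.T`. -/
theorem tp_output_tuple_unique_window {F V : Type}
    (r s : Set (TPTuple F V)) (hrfin : r.Finite) (hsfin : s.Finite)
    (hrWF : WF r) (hsWF : WF s) (hrDF : DupFree r) (hsDF : DupFree s)
    (op : TPOp) (u : TPTuple F V) (hu : u ∈ opResult op r s) :
    ∃! w : Window F V, IsWindow r s w ∧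
      w.fact = u.fact ∧ w.ts = u.ts ∧ w.te = u.te ∧
      ∀ t : ℕ, u.ts ≤ t → t < u.te →
        w.lamr = lamAt r u.fact t ∧ w.lams = lamAt s u.fact t := by
  obtain ⟨hlt, l1, l2, hφ, hg, hconst, hleft, hright⟩ := hu
  refine ⟨⟨u.fact, u.ts, u.te, l1, l2⟩,
    ⟨⟨hlt, ?_, ?_, ?_⟩, rfl, rfl, rfl, ?_⟩, ?_⟩
  · intro t h1 h2
    obtain ⟨e1, e2⟩ := hconst t h1 h2
    refine ⟨?_, e1, e2⟩
    rw [e1, e2]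
    cases op with
    | inter => exact Or.inl hφ.1
    | diff => exact Or.inl hφ
    | union => exact hφ
  · rcases hleft with h0 | h
    · exact Or.inl h0
    · refine Or.inr fun ⟨e1, e2⟩ => h ⟨?_, ?_⟩
      · simpa [e1, e2] using hφ
      · simpa [e1, e2] using hg
  · rintro ⟨e1, e2⟩
    exact hright ⟨by simpa [e1, e2] using hφ, by simpa [e1, e2] using hg⟩
  · intro t h1 h2
    obtain ⟨e1, e2⟩ := hconst t h1 h2
    exact ⟨e1.symm, e2.symm⟩
  · rintro ⟨f', ts', te', lr', ls'⟩ ⟨hw', hf, hts, hte, hlam⟩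
    obtain ⟨e1, e2⟩ := hlam u.ts le_rfl hlt
    obtain ⟨c1, c2⟩ := hconst u.ts le_rfl hlt
    simp only at hf hts hte e1 e2
    subst hf hts hte
    simp [e1, e2, c1, c2]
end

section
/- Let r and s be duplicate-free TP relations over the same fact type, let n_r = 2·|r| and n_s = 2·|s| be the total numbers of interval start and end points of the tuples of r and s respectively, and let f_d be the number of distinct facts occurring in tuples of r or s. Then the number of lineage-aware temporal windows satisfies |W(r,s)| ≤ n_r + n_s − f_d. -/
section Aux

variable {F V : Type}

lemma lamAt_eq {r : Set (TPTuple F V)} (hDF : DupFree r) {u : TPTuple F V} {f : F} {t : ℕ}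
    (hu : u ∈ r) (hf : u.fact = f) (h1 : u.ts ≤ t) (h2 : t < u.te) :
    lamAt r f t = some u.lam := by
  have hex : ∃ v, v ∈ r ∧ v.fact = f ∧ v.ts ≤ t ∧ t < v.te := ⟨u, hu, hf, h1, h2⟩
  rw [lamAt, dif_pos hex]
  obtain ⟨hv, hvf, hv1, hv2⟩ := hex.choose_spec
  by_cases h : hex.choose = u
  · rw [h]
  · rcases hDF _ hv _ hu h with h' | h'
    · exact absurd (hvf.trans hf.symm) h'
    · exact absurd ⟨⟨hv1, hv2⟩, h1, h2⟩ (h' t)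

lemma lamAt_some {r : Set (TPTuple F V)} {f : F} {t : ℕ} {l : LineageExpr V}
    (h : lamAt r f t = some l) :
    ∃ u, u ∈ r ∧ u.fact = f ∧ u.ts ≤ t ∧ t < u.te ∧ u.lam = l := by
  rw [lamAt] at h
  split_ifs at h with hex
  · obtain ⟨hv, hvf, hv1, hv2⟩ := hex.choose_spec
    exact ⟨hex.choose, hv, hvf, hv1, hv2, Option.some.inj h⟩

lemma lamAt_ne {r : Set (TPTuple F V)} {f : F} {t : ℕ} (h : lamAt r f t ≠ none) :
    ∃ u, u ∈ r ∧ u.fact = f ∧ u.ts ≤ t ∧ t < u.te := by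
  rw [lamAt] at h
  split_ifs at h with hex
  · exact hex
  · exact absurd rfl h

lemma lamAt_change {r : Set (TPTuple F V)} (hDF : DupFree r) {f : F} {t : ℕ}
    (h : lamAt r f t ≠ lamAt r f (t + 1)) :
    ∃ u, u ∈ r ∧ u.fact = f ∧ (u.ts = t + 1 ∨ u.te = t + 1) := by
  rcases Option.eq_none_or_eq_some (lamAt r f t) with h1 | ⟨l, hl⟩
  · rcases Option.eq_none_or_eq_some (lamAt r f (t + 1)) with h2 | ⟨l, hl⟩
    · rw [h1, h2] at h; exact absurd rfl h
    · obtain ⟨u, hu, huf, hu1, hu2, _⟩ := lamAt_some hl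
      refine ⟨u, hu, huf, Or.inl ?_⟩
      by_contra hne
      have : lamAt r f t = some u.lam := lamAt_eq hDF hu huf (by omega) (by omega)
      rw [h1] at this; exact absurd this (by simp)
  · obtain ⟨u, hu, huf, hu1, hu2, hul⟩ := lamAt_some hl
    refine ⟨u, hu, huf, Or.inr ?_⟩
    by_contra hne
    have h2 : lamAt r f (t + 1) = some u.lam := lamAt_eq hDF hu huf (by omega) (by omega)
    rw [hl, h2, hul] at h
    exact absurd rfl h

lemma window_start_event {r s : Set (TPTuple F V)} (hrDF : DupFree r) (hsDF : DupFree s)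
    {w : Window F V} (hw : IsWindow r s w) :
    ∃ u, u ∈ r ∪ s ∧ u.fact = w.fact ∧ (u.ts = w.ts ∨ u.te = w.ts) := by
  obtain ⟨hlt, hall, hstart, hend⟩ := hw
  rcases Nat.eq_zero_or_pos w.ts with h0 | hpos
  · rcases (hall w.ts le_rfl hlt).1 with hn | hn
    · obtain ⟨u, hu, huf, h1, h2⟩ := lamAt_ne hn
      exact ⟨u, Or.inl hu, huf, Or.inl (by omega)⟩
    · obtain ⟨u, hu, huf, h1, h2⟩ := lamAt_ne hn
      exact ⟨u, Or.inr hu, huf, Or.inl (by omega)⟩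
  · rcases hstart with h0 | hne
    · omega
    · have ht1 : w.ts - 1 + 1 = w.ts := by omega
      have hlam := hall w.ts le_rfl hlt
      have hch : lamAt r w.fact (w.ts - 1) ≠ lamAt r w.fact (w.ts - 1 + 1) ∨
          lamAt s w.fact (w.ts - 1) ≠ lamAt s w.fact (w.ts - 1 + 1) := by
        by_contra hc
        push_neg at hc
        rw [ht1] at hc
        exact hne ⟨hc.1.trans hlam.2.1, hc.2.trans hlam.2.2⟩
      rcases hch with hch | hch
      · obtain ⟨u, hu, huf, hor⟩ := lamAt_change hrDF hch
        exact ⟨u, Or.inl hu, huf, by omega⟩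
      · obtain ⟨u, hu, huf, hor⟩ := lamAt_change hsDF hch
        exact ⟨u, Or.inr hu, huf, by omega⟩

lemma window_start_lt {r s : Set (TPTuple F V)} {w : Window F V} (hw : IsWindow r s w) :
    ∃ u, u ∈ r ∪ s ∧ u.fact = w.fact ∧ w.ts < u.te := by
  obtain ⟨hlt, hall, _, _⟩ := hw
  rcases (hall w.ts le_rfl hlt).1 with hn | hn
  · obtain ⟨u, hu, huf, h1, h2⟩ := lamAt_ne hn
    exact ⟨u, Or.inl hu, huf, h2⟩
  · obtain ⟨u, hu, huf, h1, h2⟩ := lamAt_ne hn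
    exact ⟨u, Or.inr hu, huf, h2⟩

lemma window_eq {r s : Set (TPTuple F V)} {w w' : Window F V}
    (hw : IsWindow r s w) (hw' : IsWindow r s w')
    (hf : w.fact = w'.fact) (hts : w.ts = w'.ts) : w = w' := by
  obtain ⟨hlt, hall, _, hend⟩ := hw
  obtain ⟨hlt', hall', _, hend'⟩ := hw'
  have h2 := hall w.ts le_rfl hlt
  have h2' := hall' w'.ts le_rfl hlt'
  have hlamr : w.lamr = w'.lamr := by
    rw [← h2.2.1, ← h2'.2.1, hf, hts]
  have hlams : w.lams = w'.lams := by
    rw [← h2.2.2, ← h2'.2.2, hf, hts]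
  have hte : w.te = w'.te := by
    by_contra hne
    rcases Nat.lt_or_ge w.te w'.te with h | h
    · have h1 := hall' w.te (by omega) h
      exact hend ⟨by rw [hf, h1.2.1, hlamr], by rw [hf, h1.2.2, hlams]⟩
    · have hlt2 : w'.te < w.te := by omega
      have h1 := hall w'.te (by omega) hlt2
      exact hend' ⟨by rw [← hf, h1.2.1, hlamr], by rw [← hf, h1.2.2, hlams]⟩
  cases w; cases w'
  simp_all

end Aux
/-- For duplicate-free TP relations `r` and `s`, the number of
lineage-aware temporal windows is at most `n_r + n_s − f_d`, where
`n_r = 2·|r|` and `n_s = 2·|s|` are the total numbers of interval endpoints and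
`f_d` is the number of distinct facts occurring in `r` or `s`. -/
theorem tp_window_count_bound {F V : Type}
    (r s : Set (TPTuple F V)) (hrfin : r.Finite) (hsfin : s.Finite)
    (hrWF : WF r) (hsWF : WF s) (hrDF : DupFree r) (hsDF : DupFree s) :
    {w : Window F V | IsWindow r s w}.ncard ≤
      2 * r.ncard + 2 * s.ncard - (TPTuple.fact '' (r ∪ s)).ncard := by
  classical
  set W := {w : Window F V | IsWindow r s w} with hW
  have hfin : (r ∪ s).Finite := hrfin.union hsfin
  set RS : Finset (TPTuple F V) := hfin.toFinset with hRS
  set Facts : Finset F := RS.image TPTuple.fact with hFacts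
  set T : Finset (F × ℕ) :=
    RS.biUnion (fun u => {(u.fact, u.ts), (u.fact, u.te)}) with hT
  set M : F → ℕ := fun f => (RS.filter (fun u => u.fact = f)).sup TPTuple.te with hM
  set Bad : Finset (F × ℕ) := Facts.image (fun f => (f, M f)) with hBad
  have hmemRS : ∀ u : TPTuple F V, u ∈ RS ↔ u ∈ r ∪ s := fun u => hfin.mem_toFinset
  -- injectivity of w ↦ (fact, ts) on W
  have hinj : Set.InjOn (fun w : Window F V => (w.fact, w.ts)) W := by
    intro w hw w' hw' h
    exact window_eq hw hw' (congrArg Prod.fst h) (congrArg Prod.snd h)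
  -- image lands in T \ Bad
  have himg : (fun w : Window F V => (w.fact, w.ts)) '' W ⊆ ↑(T \ Bad) := by
    rintro ⟨f, t⟩ ⟨w, hw, hwe⟩
    obtain ⟨hf, ht⟩ : w.fact = f ∧ w.ts = t := Prod.mk.injEq .. ▸ hwe
    subst hf; subst ht
    simp only [Finset.coe_sdiff, Set.mem_diff, Finset.mem_coe]
    constructor
    · obtain ⟨u, hu, huf, hor⟩ := window_start_event hrDF hsDF hw
      rw [hT]
      refine Finset.mem_biUnion.mpr ⟨u, (hmemRS u).mpr hu, ?_⟩
      rcases hor with h | h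
      · simp [huf, h]
      · simp [huf, h]
    · intro hbad
      rw [hBad] at hbad
      obtain ⟨f, hfF, hfe⟩ := Finset.mem_image.mp hbad
      obtain ⟨hf1, hf2⟩ : f = w.fact ∧ M f = w.ts := Prod.mk.injEq .. ▸ hfe
      obtain ⟨u, hu, huf, hlt⟩ := window_start_lt hw
      have humem : u ∈ RS.filter (fun u => u.fact = f) := by
        rw [Finset.mem_filter]
        exact ⟨(hmemRS u).mpr hu, huf.trans hf1.symm⟩
      have : u.te ≤ M f := Finset.le_sup (f := TPTuple.te) humem
      omega
  -- Bad ⊆ T and |Bad| = |Facts|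
  have hBadT : Bad ⊆ T := by
    intro p hp
    rw [hBad] at hp
    obtain ⟨f, hfF, hfe⟩ := Finset.mem_image.mp hp
    rw [hFacts] at hfF
    obtain ⟨u0, hu0, hu0f⟩ := Finset.mem_image.mp hfF
    have hne : (RS.filter (fun u => u.fact = f)).Nonempty :=
      ⟨u0, Finset.mem_filter.mpr ⟨hu0, hu0f⟩⟩
    obtain ⟨u1, hu1, hsup⟩ := Finset.exists_mem_eq_sup _ hne TPTuple.te
    have hu1f : u1.fact = f := (Finset.mem_filter.mp hu1).2
    rw [hT]
    refine Finset.mem_biUnion.mpr ⟨u1, (Finset.mem_filter.mp hu1).1, ?_⟩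
    have hMf : M f = u1.te := hsup
    rw [← hfe]
    simp only [Finset.mem_insert, Finset.mem_singleton]
    right
    rw [hMf, ← hu1f]
  have hBadCard : Bad.card = Facts.card := by
    rw [hBad]
    apply Finset.card_image_of_injective
    intro a b hab
    exact congrArg Prod.fst hab
  -- |T| ≤ 2 |RS|
  have hTcard : T.card ≤ 2 * RS.card := by
    rw [hT]
    calc (RS.biUnion (fun u => {(u.fact, u.ts), (u.fact, u.te)})).card
        ≤ ∑ u ∈ RS, ({(u.fact, u.ts), (u.fact, u.te)} : Finset (F × ℕ)).card :=
          Finset.card_biUnion_le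
      _ ≤ ∑ u ∈ RS, 2 := Finset.sum_le_sum (fun u _ => Finset.card_insert_le _ _)
      _ = 2 * RS.card := by rw [Finset.sum_const, smul_eq_mul, mul_comm]
  -- |RS| ≤ |r| + |s|
  have hRScard : RS.card ≤ r.ncard + s.ncard := by
    rw [hRS, ← Set.ncard_eq_toFinset_card _ hfin]
    exact Set.ncard_union_le r s
  -- Facts.card = f_d
  have hFactsCard : (TPTuple.fact '' (r ∪ s)).ncard = Facts.card := by
    rw [hFacts, ← Set.ncard_coe_finset (RS.image TPTuple.fact), Finset.coe_image,
      hRS, hfin.coe_toFinset]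
  -- assemble
  have hmain : W.ncard ≤ (T \ Bad).card := by
    rw [← Set.ncard_image_of_injOn hinj, ← Set.ncard_coe_finset (T \ Bad)]
    exact Set.ncard_le_ncard himg (Finset.finite_toSet _)
  have hsdiff : (T \ Bad).card = T.card - Bad.card := Finset.card_sdiff_of_subset hBadT
  rw [hFactsCard]
  omega
end

section
/- Let r and s be duplicate-free TP relations over the same fact type and let op ∈ {∪ᵀᵖ, ∩ᵀᵖ, −ᵀᵖ}. Then the result relation r opᵀᵖ s is itself duplicate-free: any two distinct tuples of r opᵀᵖ s either have different facts or disjoint time intervals. -/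
lemma ts_not_lt {F V : Type} {r s : Set (TPTuple F V)} {op : TPOp}
    {u u' : TPTuple F V} (hu : u ∈ opResult op r s) (hu' : u' ∈ opResult op r s)
    (hf : u.fact = u'.fact) {t : ℕ} (ht : TPTuple.memT t u ∧ TPTuple.memT t u') :
    ¬ u.ts < u'.ts := by
  intro hlt
  obtain ⟨_, l1, l2, hfil, hg, hall, _, _⟩ := hu
  obtain ⟨_, l1', l2', hfil', hg', hall', hmax', _⟩ := hu'
  obtain ⟨⟨ht1, ht2⟩, ⟨ht1', ht2'⟩⟩ := ht
  have h1 := hall t ht1 ht2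
  have h2 := hall' t ht1' ht2'
  rw [hf] at h1
  have e1 : l1 = l1' := by rw [← h1.1, h2.1]
  have e2 : l2 = l2' := by rw [← h1.2, h2.2]
  have elam : u.lam = u'.lam := by
    rw [e1, e2, hg'] at hg; exact (Option.some.injEq _ _ ▸ hg).symm
  have h0 : u'.ts ≠ 0 := by omega
  have h3 := hall (u'.ts - 1) (by omega) (by omega)
  rw [hf] at h3
  rcases hmax' with h | h
  · exact h0 h
  · exact h ⟨by rw [h3.1, h3.2]; exact hfil,
      by rw [h3.1, h3.2, hg, elam]⟩

lemma te_not_lt {F V : Type} {r s : Set (TPTuple F V)} {op : TPOp}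
    {u u' : TPTuple F V} (hu : u ∈ opResult op r s) (hu' : u' ∈ opResult op r s)
    (hf : u.fact = u'.fact) {t : ℕ} (ht : TPTuple.memT t u ∧ TPTuple.memT t u') :
    ¬ u.te < u'.te := by
  intro hlt
  obtain ⟨_, l1, l2, hfil, hg, hall, _, hmax⟩ := hu
  obtain ⟨_, l1', l2', hfil', hg', hall', _, _⟩ := hu'
  obtain ⟨⟨ht1, ht2⟩, ⟨ht1', ht2'⟩⟩ := ht
  have h1 := hall t ht1 ht2
  have h2 := hall' t ht1' ht2'
  rw [hf] at h1
  have e1 : l1 = l1' := by rw [← h1.1, h2.1]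
  have e2 : l2 = l2' := by rw [← h1.2, h2.2]
  have elam : u.lam = u'.lam := by
    rw [e1, e2, hg'] at hg; exact (Option.some.injEq _ _ ▸ hg).symm
  have h3 := hall' u.te (by omega) hlt
  rw [← hf] at h3
  exact hmax ⟨by rw [h3.1, h3.2]; exact hfil',
    by rw [h3.1, h3.2, hg', ← elam]⟩

/-- For duplicate-free TP relations `r` and `s` and any TP set
operation `op`, the result `r opᵀᵖ s` is itself duplicate-free: any two distinct
tuples of the result have different facts or disjoint time intervals. -/
theorem tp_opResult_dupFree {F V : Type}
    (r s : Set (TPTuple F V)) (hrfin : r.Finite) (hsfin : s.Finite)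
    (hrWF : WF r) (hsWF : WF s) (hrDF : DupFree r) (hsDF : DupFree s)
    (op : TPOp) :
    DupFree (opResult op r s) := by
  intro u hu u' hu' hne
  by_contra h
  push_neg at h
  obtain ⟨hf, t, ht⟩ := h
  have hts : u.ts = u'.ts := by
    have := ts_not_lt hu hu' hf ht
    have := ts_not_lt hu' hu hf.symm ht.symm
    omega
  have hte : u.te = u'.te := by
    have := te_not_lt hu hu' hf ht
    have := te_not_lt hu' hu hf.symm ht.symm
    omega
  obtain ⟨_, l1, l2, _, hg, hall, _, _⟩ := hu
  obtain ⟨_, l1', l2', _, hg', hall', _, _⟩ := hu'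
  obtain ⟨⟨ht1, ht2⟩, ⟨ht1', ht2'⟩⟩ := ht
  have h1 := hall t ht1 ht2
  have h2 := hall' t ht1' ht2'
  rw [hf] at h1
  have elam : u.lam = u'.lam := by
    have e1 : l1 = l1' := by rw [← h1.1, h2.1]
    have e2 : l2 = l2' := by rw [← h1.2, h2.2]
    rw [e1, e2, hg'] at hg
    exact (Option.some.injEq _ _ ▸ hg).symm
  exact hne (by cases u; cases u'; simp_all)
end

section
/- The result of any TP set query over duplicate-free TP relations is duplicate-free: if Q is an expression built from duplicate-free TP relations by the operators ∪ᵀᵖ, ∩ᵀᵖ, −ᵀᵖ, then any two distinct tuples of the result of Q either have different facts or disjoint time intervals. -/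
/-- TP set queries over base relations indexed by `ι`. -/
inductive TPQuery (ι : Type) : Type where
  | base : ι → TPQuery ι
  | inter : TPQuery ι → TPQuery ι → TPQuery ι
  | diff : TPQuery ι → TPQuery ι → TPQuery ι
  | union : TPQuery ι → TPQuery ι → TPQuery ι

/-- The list of (indices of) base relations occurring in a query. -/
def TPQuery.idxList {ι : Type} : TPQuery ι → List ι
  | .base i => [i]
  | .inter q1 q2 => q1.idxList ++ q2.idxList
  | .diff q1 q2 => q1.idxList ++ q2.idxList
  | .union q1 q2 => q1.idxList ++ q2.idxList

/-- A query is non-repeating iff each base relation occurs at most once in it. -/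
def TPQuery.NonRepeating {ι : Type} (q : TPQuery ι) : Prop := q.idxList.Nodup

/-- Evaluation of a TP set query, given an assignment `R` of base relations. -/
def TPQuery.eval {ι F V : Type} (R : ι → Set (TPTuple F V)) :
    TPQuery ι → Set (TPTuple F V)
  | .base i => R i
  | .inter q1 q2 => opResult TPOp.inter (q1.eval R) (q2.eval R)
  | .diff q1 q2 => opResult TPOp.diff (q1.eval R) (q2.eval R)
  | .union q1 q2 => opResult TPOp.union (q1.eval R) (q2.eval R)

theorem opResult_dupFree {F V : Type} (op : TPOp) (r s : Set (TPTuple F V)) :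
    DupFree (opResult op r s) := by
  intro u hu u' hu' hne
  by_cases hf : u.fact = u'.fact
  · right
    rintro t ⟨⟨hts, hte⟩, ⟨hts', hte'⟩⟩
    apply hne
    obtain ⟨hlt, l1, l2, hφ, hg, hconst, hleft, hright⟩ := hu
    obtain ⟨hlt', l1', l2', hφ', hg', hconst', hleft', hright'⟩ := hu'
    have hc := hconst t hts hte
    have hc' := hconst' t hts' hte'
    rw [hf] at hc
    have e1 : l1 = l1' := by rw [← hc.1, hc'.1]
    have e2 : l2 = l2' := by rw [← hc.2, hc'.2]
    subst e1; subst e2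
    have hlam : u.lam = u'.lam := by
      rw [hg] at hg'; exact Option.some_injective _ hg'
    have hts_eq : u.ts = u'.ts := by
      rcases Nat.lt_trichotomy u.ts u'.ts with h | h | h
      · exfalso
        have hc2 := hconst (u'.ts - 1) (by omega) (by omega)
        rw [hf] at hc2
        rcases hleft' with h0 | hbad
        · omega
        · exact hbad ⟨by rw [hc2.1, hc2.2]; exact hφ, by rw [hc2.1, hc2.2, hg, hlam]⟩
      · exact h
      · exfalso
        have hc2 := hconst' (u.ts - 1) (by omega) (by omega)
        rw [← hf] at hc2
        rcases hleft with h0 | hbad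
        · omega
        · exact hbad ⟨by rw [hc2.1, hc2.2]; exact hφ', by rw [hc2.1, hc2.2, hg', ← hlam]⟩
    have hte_eq : u.te = u'.te := by
      rcases Nat.lt_trichotomy u.te u'.te with h | h | h
      · exfalso
        have hc2 := hconst' u.te (by omega) h
        rw [← hf] at hc2
        exact hright ⟨by rw [hc2.1, hc2.2]; exact hφ', by rw [hc2.1, hc2.2, hg', ← hlam]⟩
      · exact h
      · exfalso
        have hc2 := hconst u'.te (by omega) h
        rw [hf] at hc2
        exact hright' ⟨by rw [hc2.1, hc2.2]; exact hφ, by rw [hc2.1, hc2.2, hg, hlam]⟩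
    cases u; cases u'; simp_all
  · left; exact hf

/-- The result of any TP set query over duplicate-free TP
relations is duplicate-free: any two distinct tuples of the result have
different facts or disjoint time intervals. -/
theorem tp_query_eval_dupFree {ι F V : Type}
    (R : ι → Set (TPTuple F V))
    (hfin : ∀ i, (R i).Finite) (hWF : ∀ i, WF (R i)) (hDF : ∀ i, DupFree (R i))
    (q : TPQuery ι) :
    DupFree (q.eval R) := by
  induction q with
  | base i => exact hDF i
  | inter q1 q2 _ _ => exact opResult_dupFree _ _ _
  | diff q1 q2 _ _ => exact opResult_dupFree _ _ _
  | union q1 q2 _ _ => exact opResult_dupFree _ _ _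
end

section
/- Let V be a finite type and let μ be the product probability measure on assignments V → Bool with independent coordinates, coordinate v being true with probability p_v ∈ [0,1]. For every Boolean formula φ over V in one-occurrence form (each variable occurs at most once in φ), the probability μ({a | φ evaluates to true under a}) equals the value Pe(φ) computed by recursion on φ: Pe(v) = p_v, Pe(¬ψ) = 1 − Pe(ψ), Pe(ψ₁ ∧ ψ₂) = Pe(ψ₁)·Pe(ψ₂), and Pe(ψ₁ ∨ ψ₂) = Pe(ψ₁) + Pe(ψ₂) − Pe(ψ₁)·Pe(ψ₂). -/
/-- Evaluation of a Boolean lineage formula under an assignment of truth values. -/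
def LineageExpr.eval {V : Type} (a : V → Bool) : LineageExpr V → Bool
  | .var v => a v
  | .not φ => !(φ.eval a)
  | .and φ ψ => φ.eval a && ψ.eval a
  | .or φ ψ => φ.eval a || ψ.eval a

/-- The set of variables occurring in a Boolean formula. -/
def LineageExpr.vars {V : Type} : LineageExpr V → Set V
  | .var v => {v}
  | .not φ => φ.vars
  | .and φ ψ => φ.vars ∪ ψ.vars
  | .or φ ψ => φ.vars ∪ ψ.vars

open MeasureTheory in
/-- The product Bernoulli measure on assignments `V → Bool`: coordinates are
independent and coordinate `v` is `true` with probability `p v`. -/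
noncomputable def prodBernoulli {V : Type} [Fintype V] (p : V → ENNReal)
    (hp : ∀ v, p v ≤ 1) : Measure (V → Bool) :=
  Measure.pi fun v => (PMF.bernoulli (p v).toNNReal
    (by simpa using ENNReal.toNNReal_mono ENNReal.one_ne_top (hp v))).toMeasure
/-- Number of occurrences of the tuple identifier `v` in a lineage formula. -/
def LineageExpr.varCount {V : Type} [DecidableEq V] (v : V) : LineageExpr V → ℕ
  | .var w => if w = v then 1 else 0
  | .not φ => φ.varCount v
  | .and φ ψ => φ.varCount v + ψ.varCount v
  | .or φ ψ => φ.varCount v + ψ.varCount v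

/-- A lineage formula is in one-occurrence form (1OF) iff every tuple identifier
occurs at most once in it. -/
def OneOccurrenceForm {V : Type} [DecidableEq V] (φ : LineageExpr V) : Prop :=
  ∀ v : V, φ.varCount v ≤ 1
/-- The recursive probability valuation of a Boolean formula:
`Pe(v) = p v`, `Pe(¬ψ) = 1 − Pe ψ`, `Pe(ψ₁ ∧ ψ₂) = Pe ψ₁ · Pe ψ₂`,
`Pe(ψ₁ ∨ ψ₂) = Pe ψ₁ + Pe ψ₂ − Pe ψ₁ · Pe ψ₂`. -/
noncomputable def Pe {V : Type} (p : V → ℝ) : LineageExpr V → ℝ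
  | .var v => p v
  | .not φ => 1 - Pe p φ
  | .and φ ψ => Pe p φ * Pe p ψ
  | .or φ ψ => Pe p φ + Pe p ψ - Pe p φ * Pe p ψ

section AuxLemmas

open MeasureTheory

lemma LineageExpr.eval_congr {V : Type} (φ : LineageExpr V) {a b : V → Bool}
    (h : ∀ v ∈ φ.vars, a v = b v) : φ.eval a = φ.eval b := by
  induction φ with
  | var v => exact h v rfl
  | not φ ih => simp only [LineageExpr.eval]; rw [ih h]
  | and φ ψ ih1 ih2 =>
      simp only [LineageExpr.eval]
      rw [ih1 (fun v hv => h v (Set.mem_union_left _ hv)),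
        ih2 (fun v hv => h v (Set.mem_union_right _ hv))]
  | or φ ψ ih1 ih2 =>
      simp only [LineageExpr.eval]
      rw [ih1 (fun v hv => h v (Set.mem_union_left _ hv)),
        ih2 (fun v hv => h v (Set.mem_union_right _ hv))]

lemma LineageExpr.one_le_varCount_of_mem_vars {V : Type} [DecidableEq V]
    {φ : LineageExpr V} {v : V} (h : v ∈ φ.vars) : 1 ≤ φ.varCount v := by
  induction φ with
  | var w =>
      have : v = w := h
      subst this
      simp [LineageExpr.varCount]
  | not φ ih => exact ih h
  | and φ ψ ih1 ih2 =>
      rcases h with h | h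
      · have := ih1 h; simp only [LineageExpr.varCount]; omega
      · have := ih2 h; simp only [LineageExpr.varCount]; omega
  | or φ ψ ih1 ih2 =>
      rcases h with h | h
      · have := ih1 h; simp only [LineageExpr.varCount]; omega
      · have := ih2 h; simp only [LineageExpr.varCount]; omega

open MeasureTheory in
lemma prodBernoulli_inter_of_depends {V : Type} [Fintype V] [DecidableEq V]
    (p : V → ENNReal) (hp : ∀ v, p v ≤ 1) (q : V → Prop) [DecidablePred q]
    (A B : Set (V → Bool))
    (hA : ∀ a b : V → Bool, (∀ v, q v → a v = b v) → (a ∈ A ↔ b ∈ A))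
    (hB : ∀ a b : V → Bool, (∀ v, ¬ q v → a v = b v) → (a ∈ B ↔ b ∈ B)) :
    prodBernoulli p hp (A ∩ B) = prodBernoulli p hp A * prodBernoulli p hp B := by
  classical
  set ν : ∀ _ : V, Measure Bool := fun v => (PMF.bernoulli (p v).toNNReal (by simpa using ENNReal.toNNReal_mono ENNReal.one_ne_top (hp v))).toMeasure with hν
  haveI : ∀ v, IsProbabilityMeasure (ν v) := fun v => PMF.toMeasure.isProbabilityMeasure _
  set e := MeasurableEquiv.piEquivPiSubtypeProd (fun _ : V => Bool) q with he
  have hmp := measurePreserving_piEquivPiSubtypeProd (α := fun _ : V => Bool) ν q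
  set A' : Set ({v // q v} → Bool) :=
    {x | (fun v => if h : q v then x ⟨v, h⟩ else false) ∈ A} with hA'
  set B' : Set ({v // ¬ q v} → Bool) :=
    {x | (fun v => if h : ¬ q v then x ⟨v, h⟩ else false) ∈ B} with hB'
  have heA : ∀ a : V → Bool, ((fun v : {v // q v} => a v) ∈ A' ↔ a ∈ A) := by
    intro a
    refine hA _ a fun v hv => ?_
    simp [hA', dif_pos hv]
  have heB : ∀ a : V → Bool, ((fun v : {v // ¬ q v} => a v) ∈ B' ↔ a ∈ B) := by
    intro a
    refine hB _ a fun v hv => ?_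
    simp [hB', dif_pos hv]
  have hAeq : A = e ⁻¹' (A' ×ˢ Set.univ) := by
    ext a
    simp only [Set.mem_preimage, Set.mem_prod, Set.mem_univ, and_true, he,
      MeasurableEquiv.piEquivPiSubtypeProd, MeasurableEquiv.coe_mk,
      Equiv.piEquivPiSubtypeProd_apply]
    exact (heA a).symm
  have hBeq : B = e ⁻¹' (Set.univ ×ˢ B') := by
    ext a
    simp only [Set.mem_preimage, Set.mem_prod, Set.mem_univ, true_and, he,
      MeasurableEquiv.piEquivPiSubtypeProd, MeasurableEquiv.coe_mk,
      Equiv.piEquivPiSubtypeProd_apply]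
    exact (heB a).symm
  have hABeq : A ∩ B = e ⁻¹' (A' ×ˢ B') := by
    rw [hAeq, hBeq, ← Set.preimage_inter, Set.prod_inter_prod, Set.univ_inter,
      Set.inter_univ]
  have hmA' : MeasurableSet A' := (Set.to_countable _).measurableSet
  have hmB' : MeasurableSet B' := (Set.to_countable _).measurableSet
  have habm : MeasurableSet (A' ×ˢ B') := hmA'.prod hmB'
  show Measure.pi ν (A ∩ B) = Measure.pi ν A * Measure.pi ν B
  rw [hABeq, hAeq, hBeq, hmp.measure_preimage habm.nullMeasurableSet,
    hmp.measure_preimage (hmA'.prod MeasurableSet.univ).nullMeasurableSet,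
    hmp.measure_preimage (MeasurableSet.univ.prod hmB').nullMeasurableSet,
    Measure.prod_prod, Measure.prod_prod, Measure.prod_prod]
  simp [measure_univ]

open MeasureTheory in
lemma prodBernoulli_var {V : Type} [Fintype V] [DecidableEq V]
    (p : V → ENNReal) (hp : ∀ v, p v ≤ 1) (v : V) :
    prodBernoulli p hp {a | a v = true} = p v := by
  classical
  set ν : ∀ _ : V, Measure Bool := fun v => (PMF.bernoulli (p v).toNNReal (by simpa using ENNReal.toNNReal_mono ENNReal.one_ne_top (hp v))).toMeasure with hν
  haveI : ∀ v, IsProbabilityMeasure (ν v) := fun v => PMF.toMeasure.isProbabilityMeasure _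
  have hset : {a : V → Bool | a v = true}
      = Set.univ.pi (fun w => if w = v then {true} else Set.univ) := by
    ext a
    simp only [Set.mem_setOf_eq, Set.mem_pi, Set.mem_univ, forall_true_left]
    constructor
    · intro h w
      by_cases hw : w = v
      · subst hw; simp [h]
      · simp [hw]
    · intro h
      have := h v
      simpa using this
  show Measure.pi ν _ = p v
  rw [hset, Measure.pi_pi,
    Finset.prod_eq_single v (fun w _ hw => by rw [if_neg hw]; exact measure_univ)
      (fun h => absurd (Finset.mem_univ v) h),
    if_pos rfl]
  show (PMF.bernoulli (p v).toNNReal _).toMeasure {true} = p v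
  rw [PMF.toMeasure_apply_singleton _ _ (measurableSet_singleton true)]
  exact ENNReal.coe_toNNReal (ne_top_of_le_ne_top ENNReal.one_ne_top (hp v))

end AuxLemmas

open MeasureTheory in
/-- Under the product Bernoulli measure on `V → Bool` with
coordinate `v` true with probability `p v ∈ [0,1]`, the probability that a
Boolean formula in one-occurrence form evaluates to true equals its recursive
valuation `Pe`. -/
theorem lineage_1OF_probability_eq_Pe {V : Type} [Fintype V] [DecidableEq V]
    (p : V → ℝ) (hp0 : ∀ v, 0 ≤ p v) (hp1 : ∀ v, p v ≤ 1)
    (φ : LineageExpr V) (h1of : OneOccurrenceForm φ) :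
    (prodBernoulli (fun v => ENNReal.ofReal (p v))
        (fun v => ENNReal.ofReal_le_one.mpr (hp1 v))
        {a | φ.eval a = true}).toReal = Pe p φ := by
  classical
  haveI hprob : IsProbabilityMeasure (prodBernoulli (fun v => ENNReal.ofReal (p v))
      (fun v => ENNReal.ofReal_le_one.mpr (hp1 v))) := by
    unfold prodBernoulli
    haveI : ∀ v : V, IsProbabilityMeasure
        ((PMF.bernoulli (ENNReal.ofReal (p v)).toNNReal
          (by simpa using ENNReal.toNNReal_mono ENNReal.one_ne_top (ENNReal.ofReal_le_one.mpr (hp1 v)))).toMeasure) :=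
      fun v => PMF.toMeasure.isProbabilityMeasure _
    infer_instance
  revert h1of
  induction φ with
  | var v =>
      intro _
      have hset : {a : V → Bool | (LineageExpr.var v).eval a = true} = {a | a v = true} := rfl
      rw [hset, prodBernoulli_var]
      exact ENNReal.toReal_ofReal (hp0 v)
  | not φ ih =>
      intro h1of
      have h1 : OneOccurrenceForm φ := fun v => h1of v
      have hset : {a : V → Bool | (φ.not).eval a = true} = {a | φ.eval a = true}ᶜ := by
        ext a; simp [LineageExpr.eval]
      rw [hset, measure_compl ((Set.to_countable _).measurableSet) (measure_ne_top _ _),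
        measure_univ, ENNReal.toReal_sub_of_le prob_le_one ENNReal.one_ne_top,
        ENNReal.toReal_one, ih h1]
      rfl
  | and φ ψ ih1 ih2 =>
      intro h1of
      have h1 : OneOccurrenceForm φ := by
        intro v
        have h := h1of v
        change φ.varCount v + ψ.varCount v ≤ 1 at h
        omega
      have h2 : OneOccurrenceForm ψ := by
        intro v
        have h := h1of v
        change φ.varCount v + ψ.varCount v ≤ 1 at h
        omega
      have hdisj : ∀ v ∈ ψ.vars, v ∉ φ.vars := by
        intro v hψ hφ
        have c1 := LineageExpr.one_le_varCount_of_mem_vars hφ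
        have c2 := LineageExpr.one_le_varCount_of_mem_vars hψ
        have h := h1of v
        change φ.varCount v + ψ.varCount v ≤ 1 at h
        omega
      have hset : {a : V → Bool | (φ.and ψ).eval a = true}
          = {a | φ.eval a = true} ∩ {a | ψ.eval a = true} := by
        ext a; simp [LineageExpr.eval, Bool.and_eq_true]
      rw [hset, prodBernoulli_inter_of_depends _ _ (fun v => v ∈ φ.vars) _ _
        (fun a b h => by simp only [Set.mem_setOf_eq]; rw [φ.eval_congr h])
        (fun a b h => by
          simp only [Set.mem_setOf_eq]
          rw [ψ.eval_congr (fun v hv => h v (hdisj v hv))]),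
        ENNReal.toReal_mul, ih1 h1, ih2 h2]
      rfl
  | or φ ψ ih1 ih2 =>
      intro h1of
      have h1 : OneOccurrenceForm φ := by
        intro v
        have h := h1of v
        change φ.varCount v + ψ.varCount v ≤ 1 at h
        omega
      have h2 : OneOccurrenceForm ψ := by
        intro v
        have h := h1of v
        change φ.varCount v + ψ.varCount v ≤ 1 at h
        omega
      have hdisj : ∀ v ∈ ψ.vars, v ∉ φ.vars := by
        intro v hψ hφ
        have c1 := LineageExpr.one_le_varCount_of_mem_vars hφ
        have c2 := LineageExpr.one_le_varCount_of_mem_vars hψ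
        have h := h1of v
        change φ.varCount v + ψ.varCount v ≤ 1 at h
        omega
      set μ := prodBernoulli (fun v => ENNReal.ofReal (p v))
        (fun v => ENNReal.ofReal_le_one.mpr (hp1 v)) with hμ
      set A : Set (V → Bool) := {a | φ.eval a = true} with hA
      set B : Set (V → Bool) := {a | ψ.eval a = true} with hB
      have hset : {a : V → Bool | (φ.or ψ).eval a = true} = A ∪ B := by
        ext a; simp [LineageExpr.eval, hA, hB, Bool.or_eq_true]
      have hinter : μ (A ∩ B) = μ A * μ B := by
        refine prodBernoulli_inter_of_depends _ _ (fun v => v ∈ φ.vars) _ _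
          (fun a b h => by simp only [hA, Set.mem_setOf_eq]; rw [φ.eval_congr h])
          (fun a b h => by
            simp only [hB, Set.mem_setOf_eq]
            rw [ψ.eval_congr (fun v hv => h v (hdisj v hv))])
      have hkey : μ (A ∪ B) + μ (A ∩ B) = μ A + μ B :=
        measure_union_add_inter A ((Set.to_countable B).measurableSet)
      have hkeyR := congrArg ENNReal.toReal hkey
      rw [ENNReal.toReal_add (measure_ne_top _ _) (measure_ne_top _ _),
        ENNReal.toReal_add (measure_ne_top _ _) (measure_ne_top _ _),
        hinter, ENNReal.toReal_mul, ih1 h1, ih2 h2] at hkeyR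
      rw [hset]
      show (μ (A ∪ B)).toReal = Pe p φ + Pe p ψ - Pe p φ * Pe p ψ
      linarith [hkeyR]
end
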